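/- Magnitude homology of trees: let T be a tree. Then MH_{0,0}(T) is isomorphic to the free abelian group on the vertices of T; for each l > 0, MH_{l,l}(T) is isomorphic to the free abelian group on the oriented edges of T, with the class of an oriented edge (x,y) corresponding to the homology class of the alternating tuple (x,y,x,y,…) of l+1 entries; and MH_{k,l}(T) = 0 whenever k ≠ l. -/

import Mathlib

noncomputable section

namespace MagnitudeHomology

open Classical

variable {V : Type*} {W : Type*}

/-- The length `ℓ(x₀,…,x_k)` of a tuple of vertices: the sum of consecutive
(extended) shortest-path distances. -/
def tupleLen (G : SimpleGraph V) {k : ℕ} (x : Fin (k + 1) → V) : ℕ∞ :=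
  ∑ i : Fin k, G.edist (x i.castSucc) (x i.succ)

/-- The condition defining the generators of `MC_{k,l}(G)`: consecutive entries
distinct and total length `l`. -/
def IsMagTuple (G : SimpleGraph V) (l : ℕ) {k : ℕ} (x : Fin (k + 1) → V) : Prop :=
  (∀ i : Fin k, x i.castSucc ≠ x i.succ) ∧ tupleLen G x = (l : ℕ∞)

/-- The generating tuples of the magnitude chain group `MC_{k,l}(G)`. -/
def MagTuple (G : SimpleGraph V) (k l : ℕ) : Type _ :=
  {x : Fin (k + 1) → V // IsMagTuple G l x}

/-- The magnitude chain group `MC_{k,l}(G)`: the free abelian group on tuples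
`(x₀,…,x_k)` with consecutive entries distinct and length `l`. -/
def MC (G : SimpleGraph V) (k l : ℕ) : Type _ :=
  FreeAbelianGroup (MagTuple G k l)

instance (G : SimpleGraph V) (k l : ℕ) : AddCommGroup (MC G k l) :=
  inferInstanceAs (AddCommGroup (FreeAbelianGroup _))

/-- The generator of `MC_{k,l}(G)` corresponding to a tuple, or `0` if the tuple
does not satisfy the defining conditions. -/
def mcGen (G : SimpleGraph V) {k : ℕ} (l : ℕ) (x : Fin (k + 1) → V) : MC G k l :=
  if h : IsMagTuple G l x then FreeAbelianGroup.of (⟨x, h⟩ : MagTuple G k l) else 0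

/-- The magnitude differential `∂ = ∑_{i=1}^{k} (-1)^i ∂_i : MC_{k+1,l}(G) → MC_{k,l}(G)`,
where `∂_i` omits the `i`-th entry if this preserves the length, and is `0` otherwise. -/
def magDiff (G : SimpleGraph V) (k l : ℕ) : MC G (k + 1) l →+ MC G k l :=
  FreeAbelianGroup.lift fun (x : MagTuple G (k + 1) l) =>
    ∑ i : Fin k, ((-1 : ℤ) ^ ((i : ℕ) + 1)) •
      mcGen G l (x.1 ∘ Fin.succAbove i.succ.castSucc)

/-- The subgroup of cycles: everything in degree `0`, the kernel of `∂` in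
positive degrees. -/
def magCycles (G : SimpleGraph V) (l : ℕ) : (k : ℕ) → AddSubgroup (MC G k l)
  | 0 => ⊤
  | (k + 1) => (magDiff G k l).ker

/-- The boundaries, viewed as a subgroup of the cycles. -/
def magBoundaries (G : SimpleGraph V) (k l : ℕ) : AddSubgroup (magCycles G l k) :=
  ((magDiff G k l).range).addSubgroupOf (magCycles G l k)

/-- Magnitude homology `MH_{k,l}(G) = H_k(MC_{*,l}(G))`. -/
def MH (G : SimpleGraph V) (k l : ℕ) : Type _ :=
  magCycles G l k ⧸ magBoundaries G k l

instance (G : SimpleGraph V) (k l : ℕ) : AddCommGroup (MH G k l) :=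
  inferInstanceAs (AddCommGroup (_ ⧸ _))

/-- The homology class of a chain: its class if it is a cycle, `0` otherwise. -/
def mkMH (G : SimpleGraph V) (k l : ℕ) (z : MC G k l) : MH G k l :=
  if h : z ∈ magCycles G l k then QuotientAddGroup.mk ⟨z, h⟩ else 0

/-- The alternating tuple `(x, y, x, y, …)` with `l + 1` entries determined by an
oriented edge `(x, y)`. -/
def altTuple {G : SimpleGraph V} (l : ℕ) (e : {p : V × V // G.Adj p.1 p.2}) :
    Fin (l + 1) → V :=
  fun i => if (i : ℕ) % 2 = 0 then e.1.1 else e.1.2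



/-! ### Infrastructure: tree geometry -/

open SimpleGraph

section Tree
variable {T : SimpleGraph V}

private lemma dcomm (T : SimpleGraph V) (x y : V) : T.dist x y = T.dist y x :=
  SimpleGraph.dist_comm

private lemma dtri (hT : T.IsTree) (x y z : V) : T.dist x z ≤ T.dist x y + T.dist y z :=
  hT.isConnected.dist_triangle

private lemma dzero (hT : T.IsTree) {x y : V} (h : T.dist x y = 0) : x = y :=
  hT.isConnected.dist_eq_zero_iff.mp h

private lemma dzero' (hT : T.IsTree) {x y : V} (h : x ≠ y) : T.dist x y ≠ 0 :=
  fun h0 => h (dzero hT h0)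

private lemma done (T : SimpleGraph V) {x y : V} (h : T.Adj x y) : T.dist x y = 1 :=
  dist_eq_one_iff_adj.mpr h

/-- In a tree, every path realizes the distance. -/
lemma path_len (hT : T.IsTree) {a b : V} {p : T.Walk a b} (hp : p.IsPath) :
    p.length = T.dist a b := by
  obtain ⟨q, hq, hql⟩ := hT.isConnected.exists_path_of_dist a b
  obtain ⟨r, hr, hun⟩ := hT.existsUnique_path a b
  rw [hun p hp, ← hun q hq]
  exact hql

/-- Splitting distances along a path in a tree. -/
lemma dist_split (hT : T.IsTree) {a b c : V} {p : T.Walk a b} (hp : p.IsPath)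
    (hc : c ∈ p.support) : T.dist a c + T.dist c b = T.dist a b := by
  have h1 := path_len hT (hp.takeUntil hc)
  have h2 := path_len hT (hp.dropUntil hc)
  have h3 := path_len hT hp
  rw [← h1, ← h2, ← h3, ← Walk.length_append, Walk.take_spec]

lemma exists_desc (hT : T.IsTree) {a b : V} (h : T.dist a b ≠ 0) :
    ∃ w, T.Adj a w ∧ T.dist w b + 1 = T.dist a b := by
  obtain ⟨p, hp⟩ := exists_walk_of_dist_ne_zero h
  have hnil : ¬ p.Nil := by
    rw [Walk.not_nil_iff_lt_length]; omega
  refine ⟨p.getVert 1, p.adj_snd hnil, le_antisymm ?_ ?_⟩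
  · have h1 : T.dist (p.getVert 1) b ≤ p.tail.length := dist_le _
    have h2 := p.length_tail_add_one hnil
    omega
  · have h3 := dtri hT a (p.getVert 1) b
    have h4 : T.dist a (p.getVert 1) = 1 := done T (p.adj_snd hnil)
    omega

/-- The first vertex on the geodesic from `a` to `b` in a tree. -/
noncomputable def desc (hT : T.IsTree) (a b : V) : V :=
  if h : T.dist a b ≠ 0 then Classical.choose (exists_desc hT h) else a

lemma desc_adj (hT : T.IsTree) {a b : V} (h : T.dist a b ≠ 0) : T.Adj a (desc hT a b) := by
  rw [desc, dif_pos h]; exact (Classical.choose_spec (exists_desc hT h)).1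

lemma desc_dist (hT : T.IsTree) {a b : V} (h : T.dist a b ≠ 0) :
    T.dist (desc hT a b) b + 1 = T.dist a b := by
  rw [desc, dif_pos h]; exact (Classical.choose_spec (exists_desc hT h)).2

/-- Plateau: adjacent vertices have different distances to any vertex (trees are bipartite). -/
lemma dist_ne_of_adj (hT : T.IsTree) {a b : V} (hadj : T.Adj a b) (t : V) :
    T.dist a t ≠ T.dist b t := by
  intro heq
  rcases eq_or_ne b t with rfl | hbt
  · rw [dist_self] at heq
    exact hadj.ne (dzero hT heq)
  obtain ⟨q, hq, hql⟩ := hT.isConnected.exists_path_of_dist b t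
  by_cases hin : a ∈ q.support
  · have hs := dist_split hT hq hin
    have h1 : T.dist b a = 1 := done T hadj.symm
    have h2 : T.dist a t ≠ 0 := by
      intro h0
      have : a = t := dzero hT h0
      subst this
      have := dzero' hT hadj.ne
      have := dcomm T b a
      omega
    omega
  · have hp : (Walk.cons hadj q).IsPath := by rw [Walk.cons_isPath_iff]; exact ⟨hq, hin⟩
    have := path_len hT hp
    rw [Walk.length_cons, hql] at this
    omega

/-- Uniqueness of the descending neighbor in a tree. -/
lemma desc_unique (hT : T.IsTree) {a w t : V} (hadj : T.Adj a w)
    (hd : T.dist w t + 1 = T.dist a t) : w = desc hT a t := by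
  have hat : T.dist a t ≠ 0 := by omega
  have hadj' := desc_adj hT hat
  have hd' := desc_dist hT hat
  by_contra hne
  rcases eq_or_ne w t with rfl | hwt
  · rw [dist_self] at hd
    have : T.dist (desc hT a w) w = 0 := by omega
    exact hne ((dzero hT this).symm)
  obtain ⟨q, hq, hql⟩ := hT.isConnected.exists_path_of_dist w t
  obtain ⟨q', hq', hql'⟩ := hT.isConnected.exists_path_of_dist (desc hT a t) t
  have hin : a ∉ q.support := by
    intro hin
    have hs := dist_split hT hq hin
    have h1 : T.dist w a = 1 := done T hadj.symm
    omega
  have hin' : a ∉ q'.support := by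
    intro hin'
    have hs := dist_split hT hq' hin'
    have h1 : T.dist (desc hT a t) a = 1 := done T hadj'.symm
    omega
  have hp : (Walk.cons hadj q).IsPath := by rw [Walk.cons_isPath_iff]; exact ⟨hq, hin⟩
  have hp' : (Walk.cons hadj' q').IsPath := by rw [Walk.cons_isPath_iff]; exact ⟨hq', hin'⟩
  obtain ⟨r, hr, hun⟩ := hT.existsUnique_path a t
  have heq := (hun _ hp).trans (hun _ hp').symm
  have hsupp := congrArg Walk.support heq
  rw [Walk.support_cons, Walk.support_cons, q.support_eq_cons, q'.support_eq_cons] at hsupp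
  injection hsupp with _ h2
  injection h2 with h3 _
  exact hne h3

lemma desc_eq_of_dist_one (hT : T.IsTree) {a b : V} (h : T.dist a b = 1) : desc hT a b = b := by
  refine (desc_unique hT (dist_eq_one_iff_adj.mp h) ?_).symm
  rw [dist_self]; omega

/-- `between a b c` means `b` lies on the geodesic from `a` to `c`. -/
def between (T : SimpleGraph V) (a b c : V) : Prop :=
  T.dist a c = T.dist a b + T.dist b c

lemma desc_congr (hT : T.IsTree) {a b c : V} (h : between T a b c) (hab : T.dist a b ≠ 0) :
    desc hT a c = desc hT a b := by
  rw [between] at h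
  refine (desc_unique hT (desc_adj hT hab) ?_).symm
  have h1 := desc_dist hT hab
  have h2 := dtri hT (desc hT a b) b c
  have h3 := dtri hT a (desc hT a b) c
  have h4 : T.dist a (desc hT a b) = 1 := done T (desc_adj hT hab)
  omega

/-- Concatenation of geodesics in a tree. -/
lemma between_trans (hT : T.IsTree) {a b c d : V} (h1 : between T a b c) (h2 : between T b c d)
    (hbc : T.dist b c ≠ 0) : between T a b d := by
  rw [between] at *
  obtain ⟨n, hn⟩ : ∃ n, T.dist c d = n := ⟨_, rfl⟩
  induction n generalizing d with
  | zero =>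
    have : c = d := dzero hT hn
    subst this
    omega
  | succ n ih =>
    have hdc : T.dist d c ≠ 0 := by have := dcomm T c d; omega
    have hdadj : T.Adj d (desc hT d c) := desc_adj hT hdc
    have hdd' : T.dist (desc hT d c) c + 1 = T.dist d c := desc_dist hT hdc
    set d' := desc hT d c with hd'def
    have hcd'c := dcomm T c d'
    have hcd : T.dist c d' = n := by have := dcomm T c d; omega
    have hd'd : T.dist d' d = 1 := by have := dcomm T d d'; have := done T hdadj; omega
    have hbd' : T.dist b d' = T.dist b c + T.dist c d' := by
      have t1 := dtri hT b c d'
      have t2 := dtri hT b d' d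
      omega
    have had' : T.dist a d' = T.dist a b + T.dist b d' := ih hbd' hcd
    have hne : T.dist a d ≠ T.dist a d' := by
      have hnn := dist_ne_of_adj hT hdadj a
      have := dcomm T a d
      have := dcomm T a d'
      omega
    have t2 : T.dist a d ≤ T.dist a d' + 1 := by
      have := dtri hT a d' d
      omega
    have t4 : T.dist a d' ≤ T.dist a d + 1 := by
      have := dtri hT a d d'
      have := dcomm T d d'
      omega
    rcases Nat.lt_or_ge (T.dist a d) (T.dist a d') with hlt | hge
    · exfalso
      have hded : d = desc hT d' a := by
        apply desc_unique hT hdadj.symm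
        have := dcomm T d a
        have := dcomm T d' a
        omega
      have hd'b0 : T.dist d' b ≠ 0 := by have := dcomm T b d'; omega
      have hstep1 : desc hT d' a = desc hT d' b := by
        apply desc_congr hT _ hd'b0
        rw [between]
        have := dcomm T d' a
        have := dcomm T a d'
        have := dcomm T d' b
        have := dcomm T b a
        have := dcomm T a b
        have := dcomm T b d'
        omega
      rcases Nat.eq_zero_or_pos n with rfl | hnpos
      · -- d' = c : show d = desc d' b leads to contradiction on distance to b
        have hdescb : T.dist (desc hT d' b) b + 1 = T.dist d' b := desc_dist hT hd'b0
        rw [← hstep1, ← hded] at hdescb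
        have hd'c : d' = c := dzero hT (by omega)
        rw [hd'c] at hdescb
        have e1 := dcomm T b d
        have e2 := dcomm T b c
        omega
      · have hd'c0 : T.dist d' c ≠ 0 := by omega
        have hstep2 : desc hT d' b = desc hT d' c := by
          apply desc_congr hT _ hd'c0
          rw [between]
          have := dcomm T d' b
          have := dcomm T b d'
          have := dcomm T c b
          have := dcomm T b c
          have := dcomm T d' c
          omega
        have hdescc : T.dist (desc hT d' c) c + 1 = T.dist d' c := desc_dist hT hd'c0
        rw [← hstep2, ← hstep1, ← hded] at hdescc
        have := dcomm T d' c
        have := dcomm T c d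
        omega
    · omega


end Tree

/-! ### Infrastructure: tuple calculus -/

section Tuples
variable {T : SimpleGraph V}

/-- `ℕ`-indexed access to a tuple, clamped at the top. -/
def at' {k : ℕ} (x : Fin (k + 1) → V) (m : ℕ) : V := x ⟨min m k, by omega⟩

lemma app_congr {n : ℕ} (x : Fin n → V) {a b : ℕ} (ha : a < n) (hb : b < n) (h : a = b) :
    x ⟨a, ha⟩ = x ⟨b, hb⟩ := by subst h; rfl

lemma at'_coe {k : ℕ} (x : Fin (k + 1) → V) (i : Fin (k + 1)) : x i = at' x i := by
  unfold at'
  apply congrArg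
  exact Fin.ext (by have := i.isLt; simp only []; omega)

lemma at'_eq {k : ℕ} (x : Fin (k + 1) → V) {m : ℕ} (i : Fin (k + 1)) (h : (i : ℕ) = m) :
    x i = at' x m := by subst h; exact at'_coe x i

lemma tuple_ext {k : ℕ} {x y : Fin (k + 1) → V} (h : ∀ n, n ≤ k → at' x n = at' y n) :
    x = y := by
  funext i
  have := i.isLt
  rw [at'_eq x i rfl, at'_eq y i rfl]
  exact h i (by omega)

/-- The length of a tuple as a natural number. -/
def nlen (T : SimpleGraph V) {k : ℕ} (x : Fin (k + 1) → V) : ℕ :=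
  ∑ i : Fin k, T.dist (x i.castSucc) (x i.succ)

lemma nlen_range (T : SimpleGraph V) {k : ℕ} (x : Fin (k + 1) → V) :
    nlen T x = ∑ m ∈ Finset.range k, T.dist (at' x m) (at' x (m + 1)) := by
  rw [nlen, ← Fin.sum_univ_eq_sum_range (fun m => T.dist (at' x m) (at' x (m + 1))) k]
  refine Finset.sum_congr rfl fun i _ => ?_
  have := i.isLt
  congr 1
  · exact at'_eq x i.castSucc (by simp)
  · exact at'_eq x i.succ (by simp)

lemma tupleLen_eq_nlen (hT : T.IsTree) {k : ℕ} (x : Fin (k + 1) → V) :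
    tupleLen T x = (nlen T x : ℕ∞) := by
  rw [tupleLen, nlen, Nat.cast_sum]
  refine Finset.sum_congr rfl fun i _ => ?_
  rw [SimpleGraph.dist, ENat.coe_toNat]
  rw [SimpleGraph.edist_ne_top_iff_reachable]
  exact hT.isConnected _ _

lemma isMag_iff (hT : T.IsTree) {l k : ℕ} (x : Fin (k + 1) → V) :
    IsMagTuple T l x ↔
      (∀ m, 1 ≤ m → m ≤ k → at' x (m - 1) ≠ at' x m) ∧ nlen T x = l := by
  rw [IsMagTuple, tupleLen_eq_nlen hT, Nat.cast_inj]
  constructor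
  · rintro ⟨hd, hl⟩
    refine ⟨fun m h1 h2 heq => hd ⟨m - 1, by omega⟩ ?_, hl⟩
    rw [at'_eq x _ (show ((⟨m-1, by omega⟩ : Fin k).castSucc : ℕ) = m - 1 by
        simp only [Fin.coe_castSucc]),
      at'_eq x _ (show ((⟨m-1, by omega⟩ : Fin k).succ : ℕ) = m by
        simp only [Fin.val_succ]; omega)]
    exact heq
  · rintro ⟨hd, hl⟩
    refine ⟨fun i heq => hd (i + 1) (by omega) (by omega) ?_, hl⟩
    rw [← at'_eq x i.castSucc (by simp only [Fin.coe_castSucc]; omega),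
      ← at'_eq x i.succ (by simp only [Fin.val_succ])]
    exact heq

/-- Removing the vertex at (interior) position `m`. -/
def fcn {k : ℕ} (x : Fin (k + 2) → V) (m : ℕ) : Fin (k + 1) → V :=
  x ∘ Fin.succAbove ⟨min m (k + 1), by omega⟩

lemma succAbove_val {n : ℕ} (p : Fin (n + 1)) (i : Fin n) :
    (p.succAbove i : ℕ) = if (i : ℕ) < (p : ℕ) then (i : ℕ) else (i : ℕ) + 1 := by
  rw [Fin.succAbove]
  split
  · next h => rw [if_pos (by simpa [Fin.lt_def] using h)]; rfl
  · next h => rw [if_neg (by simpa [Fin.lt_def] using h)]; rfl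

lemma at'_fcn {k : ℕ} (x : Fin (k + 2) → V) {m n : ℕ} (hm : m ≤ k + 1) (hn : n ≤ k) :
    at' (fcn x m) n = if n < m then at' x n else at' x (n + 1) := by
  show x (Fin.succAbove ⟨min m (k + 1), by omega⟩ ⟨min n k, by omega⟩) = _
  rw [at'_eq x _ (show _ = (if n < m then n else n + 1) by
    rw [succAbove_val]
    show (if min n k < min m (k + 1) then min n k else min n k + 1) = _
    split_ifs <;> omega)]
  split_ifs <;> rfl

/-- Inserting vertex `y` at position `j`. -/
def ins {k : ℕ} (x : Fin (k + 1) → V) (j : ℕ) (y : V) : Fin (k + 2) → V :=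
  fun n => if (n : ℕ) < j then at' x n else if (n : ℕ) = j then y else at' x ((n : ℕ) - 1)

lemma at'_ins {k : ℕ} (x : Fin (k + 1) → V) {j : ℕ} (y : V) {n : ℕ} (hn : n ≤ k + 1) :
    at' (ins x j y) n = if n < j then at' x n else if n = j then y else at' x (n - 1) := by
  show (if min n (k + 1) < j then at' x (min n (k + 1))
      else if min n (k + 1) = j then y else at' x (min n (k + 1) - 1)) = _
  rw [Nat.min_eq_left (by omega)]

lemma fcn_ins {k : ℕ} (x : Fin (k + 1) → V) {j : ℕ} (hj : j ≤ k + 1) (y : V) :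
    fcn (ins x j y) j = x := by
  apply tuple_ext
  intro n hn
  rw [at'_fcn _ hj hn]
  split
  · rw [at'_ins x y (by omega), if_pos (by omega)]
  · rw [at'_ins x y (by omega), if_neg (by omega), if_neg (by omega)]
    exact congrArg (at' x) (by omega)

/-- Key length identity for faces. -/
lemma nlen_fcn (T : SimpleGraph V) {k : ℕ} (x : Fin (k + 2) → V) {m : ℕ}
    (h1 : 1 ≤ m) (h2 : m ≤ k) :
    nlen T (fcn x m) + T.dist (at' x (m - 1)) (at' x m) + T.dist (at' x m) (at' x (m + 1))
      = nlen T x + T.dist (at' x (m - 1)) (at' x (m + 1)) := by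
  set t : ℕ → ℕ := fun i => T.dist (at' x i) (at' x (i + 1)) with ht
  have hL : nlen T (fcn x m) = (∑ i ∈ Finset.range (m - 1), t i)
      + T.dist (at' x (m - 1)) (at' x (m + 1)) + ∑ i ∈ Finset.Ico m k, t (i + 1) := by
    rw [nlen_range]
    have hsplit1 : Finset.range k = Finset.range k := rfl
    rw [← Finset.sum_range_add_sum_Ico _ (show m - 1 ≤ k by omega)]
    have e1 : ∀ i ∈ Finset.range (m - 1),
        T.dist (at' (fcn x m) i) (at' (fcn x m) (i + 1)) = t i := by
      intro i hi
      rw [Finset.mem_range] at hi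
      rw [at'_fcn x (by omega) (by omega), at'_fcn x (by omega) (by omega),
        if_pos (by omega), if_pos (by omega)]
    have e2 : Finset.Ico (m - 1) k = insert (m - 1) (Finset.Ico m k) := by
      ext i
      simp only [Finset.mem_Ico, Finset.mem_insert]
      omega
    rw [Finset.sum_congr rfl e1, e2,
      Finset.sum_insert (by simp only [Finset.mem_Ico]; omega)]
    have e3 : T.dist (at' (fcn x m) (m - 1)) (at' (fcn x m) (m - 1 + 1))
        = T.dist (at' x (m - 1)) (at' x (m + 1)) := by
      rw [at'_fcn x (by omega) (by omega), at'_fcn x (by omega) (by omega),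
        if_pos (by omega), if_neg (by omega)]
      congr 2
      omega
    have e4 : ∀ i ∈ Finset.Ico m k,
        T.dist (at' (fcn x m) i) (at' (fcn x m) (i + 1)) = t (i + 1) := by
      intro i hi
      rw [Finset.mem_Ico] at hi
      rw [at'_fcn x (by omega) (by omega), at'_fcn x (by omega) (by omega),
        if_neg (by omega), if_neg (by omega)]
    rw [Finset.sum_congr rfl e4, e3]
    ring
  have hR : nlen T x = (∑ i ∈ Finset.range (m - 1), t i) + t (m - 1) + t m
      + ∑ i ∈ Finset.Ico m k, t (i + 1) := by
    rw [nlen_range]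
    rw [← Finset.sum_range_add_sum_Ico _ (show m - 1 ≤ k + 1 by omega)]
    have e2 : Finset.Ico (m - 1) (k + 1)
        = insert (m - 1) (insert m (Finset.Ico (m + 1) (k + 1))) := by
      ext i
      simp only [Finset.mem_Ico, Finset.mem_insert]
      omega
    rw [e2, Finset.sum_insert (by simp only [Finset.mem_insert, Finset.mem_Ico]; omega),
      Finset.sum_insert (by simp only [Finset.mem_Ico]; omega)]
    have e5 : ∑ i ∈ Finset.Ico (m + 1) (k + 1), t i = ∑ i ∈ Finset.Ico m k, t (i + 1) := by
      rw [Finset.sum_Ico_eq_sum_range, Finset.sum_Ico_eq_sum_range]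
      refine Finset.sum_congr (by congr 1; omega) fun i _ => ?_
      exact congrArg t (by omega)
    rw [e5]
    ring
  have hm1 : t (m - 1) = T.dist (at' x (m - 1)) (at' x m) := by
    show T.dist (at' x (m - 1)) (at' x (m - 1 + 1)) = _
    rw [show m - 1 + 1 = m by omega]
  have hm2 : t m = T.dist (at' x m) (at' x (m + 1)) := rfl
  omega

/-- A step of a tuple is long. -/
def long (T : SimpleGraph V) {k : ℕ} (x : Fin (k + 1) → V) (m : ℕ) : Prop :=
  1 ≤ m ∧ m ≤ k ∧ 2 ≤ T.dist (at' x (m - 1)) (at' x m)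

/-- The vertex at (interior) position `m` is removable. -/
def rmv (T : SimpleGraph V) {k : ℕ} (x : Fin (k + 1) → V) (m : ℕ) : Prop :=
  1 ≤ m ∧ m + 1 ≤ k ∧ between T (at' x (m - 1)) (at' x m) (at' x (m + 1))

def crit (T : SimpleGraph V) {k : ℕ} (x : Fin (k + 1) → V) (m : ℕ) : Prop :=
  long T x m ∨ rmv T x m

lemma mcGen_valid {l k : ℕ} {y : Fin (k + 1) → V} (h : IsMagTuple T l y) :
    mcGen T l y = FreeAbelianGroup.of (⟨y, h⟩ : MagTuple T k l) := by
  rw [mcGen]; exact dif_pos h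

lemma of_tuple_congr {l k : ℕ} {y z : Fin (k + 1) → V} {hy : IsMagTuple T l y}
    {hz : IsMagTuple T l z} (h : y = z) :
    FreeAbelianGroup.of (⟨y, hy⟩ : MagTuple T k l) = FreeAbelianGroup.of ⟨z, hz⟩ := by
  subst h; rfl

/-- Distinct consecutive entries, `at'` version helper. -/
lemma isMag_steps_pos (hT : T.IsTree) {l k : ℕ} {x : Fin (k + 1) → V}
    (hx : IsMagTuple T l x) {m : ℕ} (h1 : 1 ≤ m) (h2 : m ≤ k) :
    1 ≤ T.dist (at' x (m - 1)) (at' x m) := by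
  have hd := ((isMag_iff hT x).mp hx).1 m h1 h2
  have := dzero' hT hd
  omega

/-- Validity of faces at removable positions. -/
lemma isMag_fcn (hT : T.IsTree) {l k : ℕ} {x : Fin (k + 2) → V}
    (hx : IsMagTuple T l x) {m : ℕ} (hr : rmv T x m) : IsMagTuple T l (fcn x m) := by
  obtain ⟨h1, h2, hb⟩ := hr
  rw [between] at hb
  obtain ⟨hd, hl⟩ := (isMag_iff hT x).mp hx
  rw [isMag_iff hT]
  constructor
  · intro p hp1 hp2
    rw [at'_fcn x (by omega) (by omega), at'_fcn x (by omega) (by omega)]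
    rcases Nat.lt_trichotomy p m with h | h | h
    · rw [if_pos (by omega), if_pos (by omega)]
      exact hd p hp1 (by omega)
    · rw [if_pos (by omega), if_neg (by omega)]
      intro heq
      have d1 := isMag_steps_pos hT hx (show 1 ≤ m by omega) (by omega)
      have d2 := isMag_steps_pos hT hx (show 1 ≤ m + 1 by omega) (by omega)
      rw [show m + 1 - 1 = m by omega] at d2
      rw [show p - 1 = m - 1 by omega, show p + 1 = m + 1 by omega] at heq
      rw [heq] at hb d1
      have h0 : T.dist (at' x (m + 1)) (at' x (m + 1)) = 0 := SimpleGraph.dist_self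
      omega
    · rw [if_neg (by omega), if_neg (by omega)]
      have := hd (p + 1) (by omega) (by omega)
      have e : p + 1 - 1 = p - 1 + 1 := by omega
      rwa [e] at this
  · have := nlen_fcn T x h1 (by omega)
    omega

lemma mcGen_fcn_not (hT : T.IsTree) {l k : ℕ} {x : Fin (k + 2) → V}
    (hx : IsMagTuple T l x) {m : ℕ} (h1 : 1 ≤ m) (h2 : m ≤ k) (hr : ¬ rmv T x m) :
    mcGen T l (fcn x m) = 0 := by
  rw [mcGen]; refine dif_neg ?_
  intro hvalid
  obtain ⟨hd, hl⟩ := (isMag_iff hT x).mp hx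
  have hnb : T.dist (at' x (m - 1)) (at' x (m + 1))
      < T.dist (at' x (m - 1)) (at' x m) + T.dist (at' x m) (at' x (m + 1)) := by
    have htri := dtri hT (at' x (m - 1)) (at' x m) (at' x (m + 1))
    have : ¬ between T (at' x (m - 1)) (at' x m) (at' x (m + 1)) := fun hb => hr ⟨h1, by omega, hb⟩
    rw [between] at this
    omega
  have hlen := ((isMag_iff hT _).mp hvalid).2
  have := nlen_fcn T x h1 h2
  omega

/-- Validity of tuples with an inserted descending vertex at a long step. -/
lemma isMag_ins (hT : T.IsTree) {l k : ℕ} {x : Fin (k + 1) → V}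
    (hx : IsMagTuple T l x) {j : ℕ} (hlong : long T x j) :
    IsMagTuple T l (ins x j (desc hT (at' x (j - 1)) (at' x j))) := by
  obtain ⟨hj1, hj2, hjd⟩ := hlong
  set y := desc hT (at' x (j - 1)) (at' x j) with hy
  have hdn : T.dist (at' x (j - 1)) (at' x j) ≠ 0 := by omega
  have hadj : T.Adj (at' x (j - 1)) y := desc_adj hT hdn
  have hdd : T.dist y (at' x j) + 1 = T.dist (at' x (j - 1)) (at' x j) := desc_dist hT hdn
  obtain ⟨hd, hl⟩ := (isMag_iff hT x).mp hx
  have hi0 : at' (ins x j y) (j - 1) = at' x (j - 1) := by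
    rw [at'_ins x y (by omega), if_pos (by omega)]
  have hi1 : at' (ins x j y) j = y := by
    rw [at'_ins x y (by omega), if_neg (by omega), if_pos rfl]
  have hi2 : at' (ins x j y) (j + 1) = at' x j := by
    rw [at'_ins x y (by omega), if_neg (by omega), if_neg (by omega)]
    exact congrArg (at' x) (by omega)
  have hface := nlen_fcn T (ins x j y) hj1 hj2
  rw [fcn_ins x (by omega) y] at hface
  rw [hi0, hi1, hi2] at hface
  have hd1 : T.dist (at' x (j - 1)) y = 1 := done T hadj
  rw [isMag_iff hT]
  refine ⟨?_, by omega⟩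
  intro p hp1 hp2
  rw [at'_ins x y (by omega), at'_ins x y (by omega)]
  rcases Nat.lt_trichotomy p j with h | h | h
  · rw [if_pos (by omega), if_pos (by omega)]
    exact hd p hp1 (by omega)
  · subst h
    rw [if_pos (by omega), if_neg (by omega), if_pos rfl]
    exact hadj.ne
  · rw [if_neg (show ¬ p - 1 < j by omega), if_neg (show ¬ p < j by omega),
      if_neg (show ¬ p = j by omega)]
    rcases eq_or_ne (p - 1) j with h' | h'
    · rw [if_pos h']
      intro heq
      rw [h'] at heq
      rw [heq] at hdd
      have h0 : T.dist (at' x j) (at' x j) = 0 := SimpleGraph.dist_self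
      omega
    · rw [if_neg h']
      exact hd (p - 1) (by omega) (by omega)

end Tuples

/-! ### The contraction -/

section Homotopy
variable {T : SimpleGraph V}

/-- The contraction on generators: insert the descending vertex at the first critical
position if that position is a long step, otherwise `0`. -/
noncomputable def uGen (hT : T.IsTree) (l : ℕ) {k : ℕ} (x : MagTuple T k l) :
    MC T (k + 1) l :=
  if h : ∃ m, crit T x.1 m then
    if long T x.1 (Nat.find h) then
      ((-1 : ℤ) ^ (Nat.find h)) • mcGen T l
        (ins x.1 (Nat.find h) (desc hT (at' x.1 (Nat.find h - 1)) (at' x.1 (Nat.find h))))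
    else 0
  else 0

noncomputable def uHom (hT : T.IsTree) (l k : ℕ) : MC T k l →+ MC T (k + 1) l :=
  FreeAbelianGroup.lift (uGen hT l)

lemma uHom_of (hT : T.IsTree) {l k : ℕ} (x : MagTuple T k l) :
    uHom hT l k (FreeAbelianGroup.of x) = uGen hT l x :=
  FreeAbelianGroup.lift_apply_of _ _

lemma uGen_long (hT : T.IsTree) {l k : ℕ} (x : MagTuple T k l) {j : ℕ}
    (hj : crit T x.1 j) (hmin : ∀ p, p < j → ¬ crit T x.1 p) (hlong : long T x.1 j) :
    uGen hT l x = ((-1 : ℤ) ^ j) • FreeAbelianGroup.of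
      (⟨ins x.1 j (desc hT (at' x.1 (j - 1)) (at' x.1 j)), isMag_ins hT x.2 hlong⟩
        : MagTuple T (k + 1) l) := by
  have h : ∃ m, crit T x.1 m := ⟨j, hj⟩
  have hfind : Nat.find h = j := (Nat.find_eq_iff h).mpr ⟨hj, fun p hp => hmin p hp⟩
  rw [uGen, dif_pos h, hfind, if_pos hlong, mcGen_valid (isMag_ins hT x.2 hlong)]
  rfl

lemma uGen_rmv (hT : T.IsTree) {l k : ℕ} (x : MagTuple T k l) {j : ℕ}
    (hj : crit T x.1 j) (hmin : ∀ p, p < j → ¬ crit T x.1 p) (hnl : ¬ long T x.1 j) :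
    uGen hT l x = 0 := by
  have h : ∃ m, crit T x.1 m := ⟨j, hj⟩
  have hfind : Nat.find h = j := (Nat.find_eq_iff h).mpr ⟨hj, fun p hp => hmin p hp⟩
  rw [uGen, dif_pos h, hfind, if_neg hnl]

lemma uGen_nocrit (hT : T.IsTree) {l k : ℕ} (x : MagTuple T k l)
    (h : ¬ ∃ m, crit T x.1 m) : uGen hT l x = 0 := by
  rw [uGen, dif_neg h]

lemma magDiff_of {l k : ℕ} (x : MagTuple T (k + 1) l) :
    magDiff T k l (FreeAbelianGroup.of x)
      = ∑ m ∈ Finset.range k, ((-1 : ℤ) ^ (m + 1)) • mcGen T l (fcn x.1 (m + 1)) := by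
  show FreeAbelianGroup.lift _ (FreeAbelianGroup.of x) = _
  rw [FreeAbelianGroup.lift_apply_of]
  rw [← Fin.sum_univ_eq_sum_range
    (fun m => ((-1 : ℤ) ^ (m + 1)) • mcGen T l (fcn x.1 (m + 1))) k]
  refine Finset.sum_congr rfl fun i _ => ?_
  have hi := i.isLt
  congr 2
  unfold fcn
  have he : i.succ.castSucc = (⟨min ((i : ℕ) + 1) (k + 1), by omega⟩ : Fin (k + 2)) := by
    refine Fin.ext ?_
    show (i : ℕ) + 1 = min ((i : ℕ) + 1) (k + 1)
    omega
  rw [he]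

lemma exists_crit (hT : T.IsTree) {l k : ℕ} {x : Fin (k + 2) → V}
    (hx : IsMagTuple T l x) (hne : l ≠ k + 1) : ∃ m, crit T x m := by
  by_contra h
  push_neg at h
  apply hne
  have hl := ((isMag_iff hT x).mp hx).2
  have hsum : nlen T x = ∑ m ∈ Finset.range (k + 1), 1 := by
    rw [nlen_range]
    refine Finset.sum_congr rfl fun i hi => ?_
    rw [Finset.mem_range] at hi
    have hpos := isMag_steps_pos hT hx (show 1 ≤ i + 1 by omega) (by omega)
    rw [show i + 1 - 1 = i by omega] at hpos
    have hnl : ¬ long T x (i + 1) := fun hlong => h _ (Or.inl hlong)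
    rw [long] at hnl
    push_neg at hnl
    have := hnl (by omega) (by omega)
    rw [show i + 1 - 1 = i by omega] at this
    omega
  rw [Finset.sum_const, Finset.card_range, smul_eq_mul, mul_one] at hsum
  omega

lemma magDiff_nocrit (hT : T.IsTree) {l k : ℕ} (x : MagTuple T (k + 1) l)
    (h : ∀ m, ¬ crit T x.1 m) : magDiff T k l (FreeAbelianGroup.of x) = 0 := by
  rw [magDiff_of]
  refine Finset.sum_eq_zero fun m hm => ?_
  rw [Finset.mem_range] at hm
  rw [mcGen_fcn_not hT x.2 (by omega) (by omega) (fun hr => h _ (Or.inr hr)), smul_zero]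

/-- Transfer of non-criticality to faces strictly beyond `j`. -/
lemma noncrit_fcn {k : ℕ} {x : Fin (k + 2) → V} {j : ℕ}
    (hmin : ∀ q, q < j → ¬ crit T x q) {p : ℕ} (hjp : j < p) (hpk : p ≤ k + 1) :
    ∀ q, q < j → ¬ crit T (fcn x p) q := by
  intro q hq hcq
  apply hmin q hq
  rcases hcq with hlong | hrmv
  · obtain ⟨h1, h2, h3⟩ := hlong
    rw [at'_fcn x (by omega) (by omega), at'_fcn x (by omega) (by omega),
      if_pos (by omega), if_pos (by omega)] at h3
    exact Or.inl ⟨h1, by omega, h3⟩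
  · obtain ⟨h1, h2, h3⟩ := hrmv
    rw [at'_fcn x (by omega) (by omega), at'_fcn x (by omega) (by omega),
      at'_fcn x (by omega) (by omega),
      if_pos (by omega), if_pos (by omega), if_pos (by omega)] at h3
    exact Or.inr ⟨h1, by omega, h3⟩

/-- The face at the first critical position `j` (when removable) has first critical
position `j` again, of long type, with the same inserted vertex. -/
lemma uGen_fcn_self (hT : T.IsTree) {l k : ℕ} {x : Fin (k + 2) → V} (hx : IsMagTuple T l x)
    {j : ℕ} (hmin : ∀ p, p < j → ¬ crit T x p) (hr : rmv T x j)
    (pf : IsMagTuple T l (fcn x j)) :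
    ∃ pf2 : IsMagTuple T l (ins (fcn x j) j (desc hT (at' x (j - 1)) (at' x j))),
      uGen hT l (⟨fcn x j, pf⟩ : MagTuple T k l)
        = ((-1 : ℤ) ^ j) • FreeAbelianGroup.of
            (⟨_, pf2⟩ : MagTuple T (k + 1) l) := by
  obtain ⟨hj1, hj2, hb⟩ := hr
  have e1 : at' (fcn x j) (j - 1) = at' x (j - 1) := by
    rw [at'_fcn x (by omega) (by omega), if_pos (by omega)]
  have e2 : at' (fcn x j) j = at' x (j + 1) := by
    rw [at'_fcn x (by omega) (by omega), if_neg (by omega)]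
  have d1 := isMag_steps_pos hT hx hj1 (by omega)
  have d2 := isMag_steps_pos hT hx (show 1 ≤ j + 1 by omega) (by omega)
  rw [show j + 1 - 1 = j by omega] at d2
  have hbd := hb
  rw [between] at hbd
  have hlong' : long T (fcn x j) j := by
    refine ⟨hj1, by omega, ?_⟩
    rw [e1, e2]
    omega
  have hmin' : ∀ p, p < j → ¬ crit T (fcn x j) p := by
    intro p hp hc
    rcases Nat.lt_or_ge (p + 1) j with hpj | hpj
    · -- indices all below j
      apply hmin p hp
      rcases hc with hlq | hrq
      · obtain ⟨q1, q2, q3⟩ := hlq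
        rw [at'_fcn x (by omega) (by omega), at'_fcn x (by omega) (by omega),
          if_pos (by omega), if_pos (by omega)] at q3
        exact Or.inl ⟨q1, by omega, q3⟩
      · obtain ⟨q1, q2, q3⟩ := hrq
        rw [at'_fcn x (by omega) (by omega), at'_fcn x (by omega) (by omega),
          at'_fcn x (by omega) (by omega),
          if_pos (by omega), if_pos (by omega), if_pos (by omega)] at q3
        exact Or.inr ⟨q1, by omega, q3⟩
    · -- p = j - 1
      have hpeq : p = j - 1 := by omega
      rcases hc with hlq | hrq
      · obtain ⟨q1, q2, q3⟩ := hlq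
        rw [at'_fcn x (by omega) (by omega), at'_fcn x (by omega) (by omega),
          if_pos (by omega), if_pos (by omega)] at q3
        exact hmin p hp (Or.inl ⟨q1, by omega, q3⟩)
      · obtain ⟨q1, q2, q3⟩ := hrq
        rw [at'_fcn x (by omega) (by omega), at'_fcn x (by omega) (by omega),
          at'_fcn x (by omega) (by omega),
          if_pos (by omega), if_pos (by omega), if_neg (by omega)] at q3
        -- q3 : between (x (p-1)) (x p) (x (p+1+1)) with p + 1 = j
        apply hmin p hp
        refine Or.inr ⟨q1, by omega, ?_⟩
        rw [between] at q3 ⊢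
        have t1 := dtri hT (at' x (p - 1)) (at' x p) (at' x (p + 1))
        have t2 := dtri hT (at' x (p - 1)) (at' x (p + 1)) (at' x (p + 1 + 1))
        have hb2 : T.dist (at' x p) (at' x (p + 1 + 1))
            = T.dist (at' x p) (at' x (p + 1)) + T.dist (at' x (p + 1)) (at' x (p + 1 + 1)) := by
          have e3 : at' x (j - 1) = at' x p := congrArg (at' x) (by omega)
          have e4 : at' x j = at' x (p + 1) := congrArg (at' x) (by omega)
          have e5 : at' x (j + 1) = at' x (p + 1 + 1) := congrArg (at' x) (by omega)
          rw [e3, e4, e5] at hbd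
          exact hbd
        omega
  have htup : ins (fcn x j) j (desc hT (at' (fcn x j) (j - 1)) (at' (fcn x j) j))
      = ins (fcn x j) j (desc hT (at' x (j - 1)) (at' x j)) := by
    rw [e1, e2, desc_congr hT hb (by omega)]
  exact ⟨htup ▸ isMag_ins hT pf hlong',
    (uGen_long hT (⟨fcn x j, pf⟩ : MagTuple T k l) (Or.inl hlong') hmin' hlong').trans
      (congrArg (((-1 : ℤ) ^ j) • ·) (of_tuple_congr htup))⟩

/-- Faces beyond the first critical position, long case. -/
lemma uGen_fcn_far_long (hT : T.IsTree) {l k : ℕ} {x : Fin (k + 2) → V}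
    (hx : IsMagTuple T l x) {j p : ℕ} (hmin : ∀ q, q < j → ¬ crit T x q)
    (hlong : long T x j) (hjp : j < p) (hpk : p ≤ k) (pf : IsMagTuple T l (fcn x p)) :
    ∃ pf2 : IsMagTuple T l (ins (fcn x p) j (desc hT (at' x (j - 1)) (at' x j))),
      uGen hT l (⟨fcn x p, pf⟩ : MagTuple T k l)
        = ((-1 : ℤ) ^ j) • FreeAbelianGroup.of (⟨_, pf2⟩ : MagTuple T (k + 1) l) := by
  obtain ⟨hj1, hj2, hd⟩ := hlong
  have e1 : at' (fcn x p) (j - 1) = at' x (j - 1) := by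
    rw [at'_fcn x (by omega) (by omega), if_pos (by omega)]
  have e2 : at' (fcn x p) j = at' x j := by
    rw [at'_fcn x (by omega) (by omega), if_pos (by omega)]
  have hlong' : long T (fcn x p) j := by
    refine ⟨hj1, by omega, ?_⟩
    rw [e1, e2]; exact hd
  have htup : ins (fcn x p) j (desc hT (at' (fcn x p) (j - 1)) (at' (fcn x p) j))
      = ins (fcn x p) j (desc hT (at' x (j - 1)) (at' x j)) := by
    rw [e1, e2]
  exact ⟨htup ▸ isMag_ins hT pf hlong',
    (uGen_long hT (⟨fcn x p, pf⟩ : MagTuple T k l) (Or.inl hlong')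
      (noncrit_fcn hmin hjp (by omega)) hlong').trans
      (congrArg (((-1 : ℤ) ^ j) • ·) (of_tuple_congr htup))⟩

/-- Faces beyond the first critical position, removable case. -/
lemma uGen_fcn_far_rmv (hT : T.IsTree) {l k : ℕ} {x : Fin (k + 2) → V}
    (hx : IsMagTuple T l x) {j p : ℕ} (hmin : ∀ q, q < j → ¬ crit T x q)
    (hrj : rmv T x j) (hnl : ¬ long T x j) (hjp : j < p) (hpk : p ≤ k)
    (hrp : rmv T x p) (pf : IsMagTuple T l (fcn x p)) :
    uGen hT l (⟨fcn x p, pf⟩ : MagTuple T k l) = 0 := by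
  obtain ⟨hj1, hj2, hb⟩ := hrj
  have e1 : at' (fcn x p) (j - 1) = at' x (j - 1) := by
    rw [at'_fcn x (by omega) (by omega), if_pos (by omega)]
  have e2 : at' (fcn x p) j = at' x j := by
    rw [at'_fcn x (by omega) (by omega), if_pos (by omega)]
  have hrmv' : rmv T (fcn x p) j := by
    refine ⟨hj1, by omega, ?_⟩
    rw [e1, e2]
    rcases Nat.lt_or_ge (j + 1) p with h | h
    · rw [at'_fcn x (by omega) (by omega), if_pos (by omega)]
      exact hb
    · -- p = j + 1
      have hpeq : p = j + 1 := by omega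
      rw [at'_fcn x (by omega) (by omega), if_neg (by omega)]
      have hstep : T.dist (at' x j) (at' x (j + 1)) ≠ 0 := by
        have := isMag_steps_pos hT hx (show 1 ≤ j + 1 by omega) (by omega)
        rw [show j + 1 - 1 = j by omega] at this
        omega
      have h2 := hrp.2.2
      rw [hpeq] at h2
      rw [show j + 1 - 1 = j by omega] at h2
      have := between_trans hT hb h2 hstep
      rwa [show j + 1 + 1 = j + 2 from rfl] at this
  have hnl' : ¬ long T (fcn x p) j := by
    intro hl
    apply hnl
    obtain ⟨q1, q2, q3⟩ := hl
    rw [e1, e2] at q3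
    exact ⟨hj1, by omega, q3⟩
  exact uGen_rmv hT _ (Or.inr hrmv') (noncrit_fcn hmin hjp (by omega)) hnl'

section InsFacts
variable {T : SimpleGraph V}

/-- Inserting back the removed vertex. -/
lemma ins_fcn_self {k : ℕ} (x : Fin (k + 2) → V) {j : ℕ} (h1 : 1 ≤ j) (h2 : j ≤ k + 1) :
    ins (fcn x j) j (at' x j) = x := by
  apply tuple_ext
  intro n hn
  rw [at'_ins _ _ (by omega)]
  split_ifs with c1 c2
  · rw [at'_fcn x (by omega) (by omega), if_pos (by omega)]
  · rw [c2]
  · rw [at'_fcn x (by omega) (by omega), if_neg (by omega)]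
    exact congrArg (at' x) (by omega)

/-- Faces of the insertion beyond the insertion point. -/
lemma fcn_ins_comm {k : ℕ} (x : Fin (k + 2) → V) {j q : ℕ} (y : V)
    (hq : j < q) (hqk : q ≤ k + 2) :
    fcn (ins x j y) q = ins (fcn x (q - 1)) j y := by
  apply tuple_ext
  intro n hn
  rw [at'_fcn _ (by omega) (by omega), at'_ins (fcn x (q - 1)) y (by omega)]
  by_cases c1 : n < q
  · rw [if_pos c1, at'_ins x y (by omega)]
    by_cases c2 : n < j
    · rw [if_pos c2, if_pos c2, at'_fcn x (by omega) (by omega), if_pos (by omega)]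
    · by_cases c3 : n = j
      · rw [if_neg c2, if_neg c2, if_pos c3, if_pos c3]
      · rw [if_neg c2, if_neg c2, if_neg c3, if_neg c3,
          at'_fcn x (by omega) (by omega), if_pos (by omega)]
  · rw [if_neg c1, at'_ins x y (by omega), if_neg (by omega), if_neg (by omega),
      if_neg (show ¬ n < j by omega), if_neg (show ¬ n = j by omega),
      at'_fcn x (by omega) (by omega), if_neg (by omega)]
    exact congrArg (at' x) (by omega)

variable (hT : T.IsTree)

/-- Non-critical positions below `j` stay non-removable after insertion. -/
lemma ins_noncrit {l k : ℕ} {x : Fin (k + 2) → V} (hx : IsMagTuple T l x)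
    {j : ℕ} (hmin : ∀ p, p < j → ¬ crit T x p) (hlong : long T x j)
    {q : ℕ} (h2 : q < j) :
    ¬ rmv T (ins x j (desc hT (at' x (j - 1)) (at' x j))) q := by
  obtain ⟨hj1, hjk, hjd⟩ := hlong
  set y := desc hT (at' x (j - 1)) (at' x j) with hy
  rintro ⟨hq1, hq2, hb⟩
  have e0 : at' (ins x j y) (q - 1) = at' x (q - 1) := by
    rw [at'_ins _ _ (by omega), if_pos (by omega)]
  have e1 : at' (ins x j y) q = at' x q := by
    rw [at'_ins _ _ (by omega), if_pos (by omega)]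
  rw [e0, e1] at hb
  rcases Nat.lt_or_ge (q + 1) j with h | h
  · rw [at'_ins _ _ (by omega), if_pos (by omega)] at hb
    exact hmin q h2 (Or.inr ⟨hq1, by omega, hb⟩)
  · -- q + 1 = j
    have hqj : q + 1 = j := by omega
    rw [at'_ins _ _ (by omega), if_neg (by omega), if_pos (by omega)] at hb
    -- hb : between (x (q-1)) (x q) y
    have hyb : between T (at' x q) y (at' x j) := by
      rw [between]
      have hd1 : T.dist (at' x (j - 1)) y = 1 := done T (desc_adj hT (by omega))
      have hd2 : T.dist y (at' x j) + 1 = T.dist (at' x (j - 1)) (at' x j) :=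
        desc_dist hT (show T.dist (at' x (j - 1)) (at' x j) ≠ 0 by omega)
      have e3 : at' x q = at' x (j - 1) := congrArg (at' x) (by omega)
      rw [e3, hd1]
      omega
    have hd0 : T.dist (at' x q) y ≠ 0 := by
      have e3 : at' x q = at' x (j - 1) := congrArg (at' x) (by omega)
      rw [e3]
      have h5 : T.dist (at' x (j - 1)) y = 1 :=
        done T (desc_adj hT (show T.dist (at' x (j - 1)) (at' x j) ≠ 0 by omega))
      omega
    have := between_trans hT hb hyb hd0
    apply hmin q h2
    refine Or.inr ⟨hq1, by omega, ?_⟩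
    have e4 : at' x (q + 1) = at' x j := congrArg (at' x) (by omega)
    rwa [e4]

/-- The insertion point itself is removable in the inserted tuple. -/
lemma ins_rmv_self {l k : ℕ} {x : Fin (k + 2) → V} (hx : IsMagTuple T l x)
    {j : ℕ} (hlong : long T x j) :
    rmv T (ins x j (desc hT (at' x (j - 1)) (at' x j))) j := by
  obtain ⟨hj1, hjk, hjd⟩ := hlong
  set y := desc hT (at' x (j - 1)) (at' x j) with hy
  refine ⟨hj1, by omega, ?_⟩
  have e0 : at' (ins x j y) (j - 1) = at' x (j - 1) := by
    rw [at'_ins _ _ (by omega), if_pos (by omega)]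
  have e1 : at' (ins x j y) j = y := by
    rw [at'_ins _ _ (by omega), if_neg (by omega), if_pos rfl]
  have e2 : at' (ins x j y) (j + 1) = at' x j := by
    rw [at'_ins _ _ (by omega), if_neg (by omega), if_neg (by omega)]
    exact congrArg (at' x) (by omega)
  rw [e0, e1, e2, between]
  have hd1 : T.dist (at' x (j - 1)) y = 1 := done T (desc_adj hT (by omega))
  have hd2 : T.dist y (at' x j) + 1 = T.dist (at' x (j - 1)) (at' x j) :=
    desc_dist hT (show T.dist (at' x (j - 1)) (at' x j) ≠ 0 by omega)
  rw [hd1]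
  omega

/-- Removability just after the insertion point matches removability at `j` in `x`. -/
lemma ins_rmv_j1 {l k : ℕ} {x : Fin (k + 2) → V} (hx : IsMagTuple T l x)
    {j : ℕ} (hlong : long T x j) (hjk : j ≤ k) :
    rmv T (ins x j (desc hT (at' x (j - 1)) (at' x j))) (j + 1) ↔ rmv T x j := by
  obtain ⟨hj1, hjk2, hjd⟩ := hlong
  set y := desc hT (at' x (j - 1)) (at' x j) with hy
  have e0 : at' (ins x j y) (j + 1 - 1) = y := by
    rw [at'_ins _ _ (by omega), if_neg (by omega), if_pos (by omega)]
  have e1 : at' (ins x j y) (j + 1) = at' x j := by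
    rw [at'_ins _ _ (by omega), if_neg (by omega), if_neg (by omega)]
    exact congrArg (at' x) (by omega)
  have e2 : at' (ins x j y) (j + 1 + 1) = at' x (j + 1) := by
    rw [at'_ins _ _ (by omega), if_neg (by omega), if_neg (by omega)]
    exact congrArg (at' x) (by omega)
  have hd1 : T.dist (at' x (j - 1)) y = 1 := done T (desc_adj hT (by omega))
  have hd2 : T.dist y (at' x j) + 1 = T.dist (at' x (j - 1)) (at' x j) :=
    desc_dist hT (show T.dist (at' x (j - 1)) (at' x j) ≠ 0 by omega)
  constructor
  · rintro ⟨-, -, hb⟩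
    rw [e0, e1, e2, between] at hb
    refine ⟨hj1, by omega, ?_⟩
    rw [between]
    have hb1 : between T (at' x (j - 1)) y (at' x j) := by rw [between]; omega
    have hb2 : between T y (at' x j) (at' x (j + 1)) := by rw [between]; exact hb
    have h3 := between_trans hT hb1 hb2 (by omega)
    rw [between] at h3
    omega
  · rintro ⟨-, -, hb⟩
    rw [between] at hb
    refine ⟨by omega, by omega, ?_⟩
    rw [e0, e1, e2, between]
    have t1 := dtri hT y (at' x j) (at' x (j + 1))
    have t2 := dtri hT (at' x (j - 1)) y (at' x (j + 1))
    omega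

/-- Removability beyond the insertion point shifts by one. -/
lemma ins_rmv_shift {k : ℕ} {x : Fin (k + 2) → V} {j : ℕ} (y : V)
    {q : ℕ} (hq : j + 2 ≤ q) (hqk : q ≤ k + 1) :
    rmv T (ins x j y) q ↔ rmv T x (q - 1) := by
  have e0 : at' (ins x j y) (q - 1) = at' x (q - 1 - 1) := by
    rw [at'_ins _ _ (by omega), if_neg (by omega), if_neg (by omega)]
  have e1 : at' (ins x j y) q = at' x (q - 1) := by
    rw [at'_ins _ _ (by omega), if_neg (by omega), if_neg (by omega)]
  have e2 : at' (ins x j y) (q + 1) = at' x (q - 1 + 1) := by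
    rw [at'_ins _ _ (by omega), if_neg (by omega), if_neg (by omega)]
    exact congrArg (at' x) (by omega)
  constructor
  · rintro ⟨-, -, hb⟩
    rw [e0, e1, e2] at hb
    exact ⟨by omega, by omega, hb⟩
  · rintro ⟨-, -, hb⟩
    exact ⟨by omega, by omega, by rw [e0, e1, e2]; exact hb⟩

end InsFacts

end Homotopy

section Main
variable {T : SimpleGraph V}

/-- The key identity `∂ ∘ u + u ∘ ∂ = id` on generators with a critical position. -/
lemma main_identity (hT : T.IsTree) {l k : ℕ} (x : MagTuple T (k + 1) l)
    (hc : ∃ m, crit T x.1 m) :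
    magDiff T (k + 1) l (uGen hT l x) + uHom hT l k (magDiff T k l (FreeAbelianGroup.of x))
      = FreeAbelianGroup.of x := by
  obtain ⟨j, hj, hmin⟩ : ∃ j, crit T x.1 j ∧ ∀ p, p < j → ¬ crit T x.1 p :=
    ⟨Nat.find hc, Nat.find_spec hc, fun p hp => Nat.find_min hc hp⟩
  have hj1 : 1 ≤ j := hj.elim (·.1) (·.1)
  have hW : uHom hT l k (magDiff T k l (FreeAbelianGroup.of x))
      = ∑ m ∈ Finset.range k,
          ((-1 : ℤ) ^ (m + 1)) • uHom hT l k (mcGen T l (fcn x.1 (m + 1))) := by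
    rw [magDiff_of, map_sum]
    exact Finset.sum_congr rfl fun m _ => map_zsmul _ _ _
  by_cases hlong : long T x.1 j
  · -- CASE A : the first critical position is a long step
    set y := desc hT (at' x.1 (j - 1)) (at' x.1 j) with hy
    have hjle : j ≤ k + 1 := hlong.2.1
    have hins : IsMagTuple T l (ins x.1 j y) := isMag_ins hT x.2 hlong
    rw [uGen_long hT x hj hmin hlong]; erw [map_zsmul, magDiff_of, hW]
    have hred : ((⟨ins x.1 j y, hins⟩ : MagTuple T (k + 2) l) : Fin (k + 3) → V)
        = ins x.1 j y := rfl
    simp only [hred]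
    rw [Finset.smul_sum]
    have key : ∀ m ∈ Finset.range (k + 1),
        ((-1 : ℤ) ^ j) • (((-1 : ℤ) ^ (m + 1)) • mcGen T l (fcn (ins x.1 j y) (m + 1)))
          = ((if m + 1 = j then FreeAbelianGroup.of x else 0 : MC T (k + 1) l))
            - (if 1 ≤ m then
                ((-1 : ℤ) ^ m) • uHom hT l k (mcGen T l (fcn x.1 m)) else 0) := by
      intro m hm
      rw [Finset.mem_range] at hm
      rcases Nat.lt_trichotomy (m + 1) j with hcase | hcase | hcase
      · -- m + 1 < j
        erw [mcGen_fcn_not hT hins (by omega) (by omega)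
            (ins_noncrit hT x.2 hmin hlong (by omega)),
          smul_zero, smul_zero, if_neg (by omega)]
        rcases Nat.eq_zero_or_pos m with rfl | hm1
        · erw [if_neg (by omega), sub_zero]
        · erw [if_pos (show (1:ℕ) ≤ m by omega),
            mcGen_fcn_not hT x.2 (by omega) (by omega)
              (fun hr => hmin m (by omega) (Or.inr hr)),
            map_zero, smul_zero, sub_zero]
      · -- m + 1 = j
        have hfj : fcn (ins x.1 j y) (m + 1) = x.1 := by
          rw [hcase]; exact fcn_ins x.1 (by omega) y
        erw [hfj, mcGen_valid x.2, show (⟨x.1, x.2⟩ : MagTuple T (k + 1) l) = x from rfl,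
          hcase, smul_smul, ← pow_add, Even.neg_one_pow ⟨j, rfl⟩, one_smul, if_pos rfl]
        rcases Nat.eq_zero_or_pos m with rfl | hm1
        · erw [if_neg (by omega), sub_zero]
          rfl
        · erw [if_pos (show (1:ℕ) ≤ m by omega),
            mcGen_fcn_not hT x.2 (by omega) (by omega)
              (fun hr => hmin m (by omega) (Or.inr hr)),
            map_zero, smul_zero, sub_zero]
          rfl
      · rcases Nat.lt_or_ge m (j + 1) with hcase2 | hcase2
        · -- m = j
          have hmj : m = j := by omega
          subst hmj
          erw [if_neg (by omega), if_pos (by omega), zero_sub]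
          by_cases hr : rmv T x.1 m
          · have hrE : rmv T (ins x.1 m y) (m + 1) :=
              (ins_rmv_j1 hT x.2 hlong (by omega)).mpr hr
            have htup : fcn (ins x.1 m y) (m + 1) = ins (fcn x.1 m) m y :=
              (fcn_ins_comm x.1 y (by omega) (by omega) : _)
            obtain ⟨pf2, heq⟩ := uGen_fcn_self hT x.2 hmin hr (isMag_fcn hT x.2 hr)
            erw [mcGen_valid (isMag_fcn hT hins hrE),
              of_tuple_congr (hz := pf2) htup,
              mcGen_valid (isMag_fcn hT x.2 hr), uHom_of, heq,
              smul_smul, smul_smul, ← pow_add, ← pow_add,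
              Odd.neg_one_pow ⟨m, by ring⟩, Even.neg_one_pow ⟨m, rfl⟩,
              neg_one_zsmul, one_smul]
          · erw [mcGen_fcn_not hT hins (by omega) (by omega)
                (fun hv => hr ((ins_rmv_j1 hT x.2 hlong (by omega)).mp hv)),
              smul_zero, smul_zero,
              mcGen_fcn_not hT x.2 (by omega) (by omega) hr,
              map_zero, smul_zero, neg_zero]
        · -- m ≥ j + 1
          erw [if_neg (by omega), if_pos (by omega), zero_sub]
          by_cases hr : rmv T x.1 m
          · have hrE : rmv T (ins x.1 j y) (m + 1) :=
              (ins_rmv_shift y (by omega) (by omega)).mpr hr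
            have htup : fcn (ins x.1 j y) (m + 1) = ins (fcn x.1 m) j y :=
              (fcn_ins_comm x.1 y (by omega) (by omega) : _)
            obtain ⟨pf2, heq⟩ := uGen_fcn_far_long hT x.2 hmin hlong
              (show j < m by omega) (show m ≤ k by omega) (isMag_fcn hT x.2 hr)
            erw [mcGen_valid (isMag_fcn hT hins hrE),
              of_tuple_congr (hz := pf2) htup,
              mcGen_valid (isMag_fcn hT x.2 hr), uHom_of, heq,
              smul_smul, smul_smul, ← pow_add, ← pow_add,
              show ((-1 : ℤ)) ^ (j + (m + 1)) = -((-1 : ℤ)) ^ (m + j) by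
                erw [show j + (m + 1) = (m + j) + 1 by ring, pow_succ]; ring,
              neg_smul]
          · erw [mcGen_fcn_not hT hins (by omega) (by omega)
                (fun hv => hr (((ins_rmv_shift (x := x.1) (j := j) y (q := m + 1)
                  (by omega) (by omega)).mp hv : rmv T x.1 m))),
              smul_zero, smul_zero,
              mcGen_fcn_not hT x.2 (by omega) (by omega) hr,
              map_zero, smul_zero, neg_zero]
    rw [Finset.sum_congr rfl key, Finset.sum_sub_distrib]
    have h1 : (∑ m ∈ Finset.range (k + 1),
        ((if m + 1 = j then FreeAbelianGroup.of x else 0 : MC T (k + 1) l)))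
        = FreeAbelianGroup.of x := by
      erw [Finset.sum_eq_single (j - 1) (fun b _ hb => if_neg (by omega))
        (fun hnot => absurd (Finset.mem_range.mpr (by omega)) hnot)]
      erw [if_pos (by omega)]
    have h2 : (∑ m ∈ Finset.range (k + 1),
        if 1 ≤ m then ((-1 : ℤ) ^ m) • uHom hT l k (mcGen T l (fcn x.1 m)) else 0)
        = ∑ m ∈ Finset.range k,
            ((-1 : ℤ) ^ (m + 1)) • uHom hT l k (mcGen T l (fcn x.1 (m + 1))) := by
      rw [Finset.sum_range_succ']
      rw [if_neg (by omega), add_zero]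
      exact Finset.sum_congr rfl fun i _ => if_pos (by omega)
    rw [h1, h2]
    exact sub_add_cancel _ _
  · -- CASE B : the first critical position is removable
    have hrmv : rmv T x.1 j := hj.resolve_left hlong
    have hjk : j + 1 ≤ k + 1 := hrmv.2.1
    rw [uGen_rmv hT x hj hmin hlong, map_zero, zero_add, hW]
    have hterm : ∀ b ∈ Finset.range k, b ≠ j - 1 →
        ((-1 : ℤ) ^ (b + 1)) • uHom hT l k (mcGen T l (fcn x.1 (b + 1))) = 0 := by
      intro b hb hbj
      rw [Finset.mem_range] at hb
      rcases Nat.lt_or_ge (b + 1) j with h | h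
      · rw [mcGen_fcn_not hT x.2 (by omega) (by omega)
          (fun hr => hmin (b + 1) h (Or.inr hr)), map_zero, smul_zero]
      · by_cases hr : rmv T x.1 (b + 1)
        · rw [mcGen_valid (isMag_fcn hT x.2 hr)]; erw [uHom_of]; rw [
            uGen_fcn_far_rmv hT x.2 hmin hrmv hlong (show j < b + 1 by omega)
              (by omega) hr _, smul_zero]
        · rw [mcGen_fcn_not hT x.2 (by omega) (by omega) hr, map_zero, smul_zero]
    rw [Finset.sum_eq_single (j - 1) hterm
      (fun hnot => absurd (Finset.mem_range.mpr (by omega)) hnot)]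
    rw [show j - 1 + 1 = j by omega]
    rw [mcGen_valid (isMag_fcn hT x.2 hrmv)]; erw [uHom_of]
    obtain ⟨pf2, heq⟩ := uGen_fcn_self hT x.2 hmin hrmv (isMag_fcn hT x.2 hrmv)
    erw [heq, smul_smul, ← pow_add, Even.neg_one_pow ⟨j, rfl⟩, one_smul]
    have hd1 : T.dist (at' x.1 (j - 1)) (at' x.1 j) = 1 := by
      have hpos := isMag_steps_pos hT x.2 hj1 (by omega)
      have hnl : ¬ (2 ≤ T.dist (at' x.1 (j - 1)) (at' x.1 j)) :=
        fun h => hlong ⟨hj1, by omega, h⟩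
      omega
    have htup : ins (fcn x.1 j) j (desc hT (at' x.1 (j - 1)) (at' x.1 j)) = x.1 := by
      rw [desc_eq_of_dist_one hT hd1]
      exact ins_fcn_self x.1 hj1 (by omega)
    rw [of_tuple_congr (hz := x.2) htup]
    rfl

end Main

/-! ### Alternating tuples and emptiness lemmas -/

section Alt
variable {T : SimpleGraph V}

lemma magTuple_empty_gt (hT : T.IsTree) {k l : ℕ} (h : l < k) :
    IsEmpty (MagTuple T k l) := by
  constructor
  rintro ⟨x, hx⟩
  have hl := ((isMag_iff hT x).mp hx).2
  have hge : (∑ i ∈ Finset.range k, 1) ≤ nlen T x := by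
    rw [nlen_range]
    refine Finset.sum_le_sum fun i hi => ?_
    rw [Finset.mem_range] at hi
    have := isMag_steps_pos hT hx (show 1 ≤ i + 1 by omega) (by omega)
    rw [show i + 1 - 1 = i by omega] at this
    omega
  rw [Finset.sum_const, Finset.card_range, smul_eq_mul, mul_one] at hge
  omega

lemma magTuple_empty_zero {l : ℕ} (h : 0 < l) : IsEmpty (MagTuple T 0 l) := by
  constructor
  rintro ⟨x, hx⟩
  have := hx.2
  rw [tupleLen] at this
  simp only [Finset.univ_eq_empty, Finset.sum_empty] at this
  exact absurd this.symm (by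
    simp only [Nat.cast_eq_zero]
    omega)

lemma MC_subsingleton {G : SimpleGraph V} {k l : ℕ} (h : IsEmpty (MagTuple G k l)) :
    Subsingleton (MC G k l) :=
  haveI := h
  inferInstanceAs (Subsingleton (FreeAbelianGroup (MagTuple G k l)))

lemma range_bot {G : SimpleGraph V} {k l : ℕ} (h : Subsingleton (MC G (k + 1) l)) :
    (magDiff G k l).range = ⊥ := by
  rw [eq_bot_iff]
  rintro z ⟨w, rfl⟩
  rw [Subsingleton.elim w 0, map_zero]
  exact AddSubgroup.zero_mem _

lemma MH_subsingleton_of_MC {G : SimpleGraph V} {k l : ℕ} (h : Subsingleton (MC G k l)) :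
    Subsingleton (MH G k l) := by
  haveI := h
  constructor
  intro a b
  induction a using QuotientAddGroup.induction_on with
  | H a =>
  induction b using QuotientAddGroup.induction_on with
  | H b =>
  exact congrArg _ (Subsingleton.elim a b)

lemma MH_subsingleton_of_top {G : SimpleGraph V} {k l : ℕ}
    (h : magBoundaries G k l = ⊤) : Subsingleton (MH G k l) := by
  constructor
  intro a b
  induction a using QuotientAddGroup.induction_on with
  | H a =>
  induction b using QuotientAddGroup.induction_on with
  | H b =>
  apply QuotientAddGroup.eq.mpr
  rw [h]
  trivial

/-- All steps of a top-degree tuple have length one. -/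
lemma steps_one (hT : T.IsTree) {l k : ℕ} {x : Fin (k + 1) → V} (hx : IsMagTuple T l x)
    (hlk : l = k) {m : ℕ} (h1 : 1 ≤ m) (h2 : m ≤ k) :
    T.dist (at' x (m - 1)) (at' x m) = 1 := by
  by_contra hne
  have h2' := isMag_steps_pos hT hx h1 h2
  have hl := ((isMag_iff hT x).mp hx).2
  rw [nlen_range] at hl
  have hlt : (∑ _i ∈ Finset.range k, 1)
      < ∑ i ∈ Finset.range k, T.dist (at' x i) (at' x (i + 1)) := by
    apply Finset.sum_lt_sum
    · intro i hi
      rw [Finset.mem_range] at hi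
      have := isMag_steps_pos hT hx (show 1 ≤ i + 1 by omega) (by omega)
      rw [show i + 1 - 1 = i by omega] at this
      omega
    · refine ⟨m - 1, Finset.mem_range.mpr (by omega), ?_⟩
      have e : at' x (m - 1 + 1) = at' x m := congrArg (at' x) (by omega)
      rw [e]
      omega
  rw [Finset.sum_const, Finset.card_range, smul_eq_mul, mul_one] at hlt
  omega

/-- A tuple is alternating if entries two apart coincide. -/
def isAlt {k : ℕ} (x : Fin (k + 1) → V) : Prop :=
  ∀ m, 1 ≤ m → m + 1 ≤ k → at' x (m - 1) = at' x (m + 1)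

/-- Non-alternating top-degree tuples have a critical position. -/
lemma crit_of_nonalt (hT : T.IsTree) {l k : ℕ} {x : Fin (k + 2) → V}
    (hx : IsMagTuple T l x) (hl : l = k + 1) (hna : ¬ isAlt x) : ∃ m, crit T x m := by
  rw [isAlt] at hna
  push_neg at hna
  obtain ⟨m, h1, h2, hne⟩ := hna
  refine ⟨m, Or.inr ⟨h1, h2, ?_⟩⟩
  rw [between]
  have s1 : T.dist (at' x (m - 1)) (at' x m) = 1 := steps_one hT hx hl h1 (by omega)
  have s2 : T.dist (at' x m) (at' x (m + 1)) = 1 := by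
    have := steps_one hT hx hl (show 1 ≤ m + 1 by omega) (by omega)
    rwa [show m + 1 - 1 = m by omega] at this
  have htri := dtri hT (at' x (m - 1)) (at' x m) (at' x (m + 1))
  have hne1 : T.dist (at' x (m - 1)) (at' x (m + 1)) ≠ 1 := by
    intro h
    have := dist_ne_of_adj hT (dist_eq_one_iff_adj.mp s1) (at' x (m + 1))
    rw [h, s2] at this
    exact this rfl
  have hne0 : T.dist (at' x (m - 1)) (at' x (m + 1)) ≠ 0 := dzero' hT hne
  omega

/-- Alternating top-degree tuples have no critical position. -/
lemma nocrit_of_alt (hT : T.IsTree) {l k : ℕ} {x : Fin (k + 2) → V}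
    (hx : IsMagTuple T l x) (hl : l = k + 1) (ha : isAlt x) : ∀ m, ¬ crit T x m := by
  rintro m (⟨h1, h2, hd⟩ | ⟨h1, h2, hb⟩)
  · have := steps_one hT hx hl h1 h2
    omega
  · rw [between] at hb
    have := ha m h1 h2
    rw [this] at hb
    have h0 : T.dist (at' x (m + 1)) (at' x (m + 1)) = 0 := SimpleGraph.dist_self
    have s1 := isMag_steps_pos hT hx h1 (by omega)
    rw [this] at s1
    omega

/-- The contraction recovers non-alternating top-degree generators from their boundary. -/
lemma top_nonalt (hT : T.IsTree) {l k : ℕ} (hl : l = k + 1) (x : MagTuple T (k + 1) l)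
    (hna : ¬ isAlt x.1) :
    uHom hT l k (magDiff T k l (FreeAbelianGroup.of x)) = FreeAbelianGroup.of x := by
  have hc : ∃ m, crit T x.1 m := crit_of_nonalt hT x.2 hl hna
  have hmainid := main_identity hT x hc
  obtain ⟨j, hj, hmin⟩ : ∃ j, crit T x.1 j ∧ ∀ p, p < j → ¬ crit T x.1 p :=
    ⟨Nat.find hc, Nat.find_spec hc, fun p hp => Nat.find_min hc hp⟩
  have hnl : ¬ long T x.1 j := by
    rintro ⟨h1, h2, hd⟩
    have := steps_one hT x.2 hl h1 h2
    omega
  rw [uGen_rmv hT x hj hmin hnl, map_zero, zero_add] at hmainid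
  exact hmainid

lemma top_alt_diff_zero (hT : T.IsTree) {l k : ℕ} (hl : l = k + 1)
    (x : MagTuple T (k + 1) l) (ha : isAlt x.1) :
    magDiff T k l (FreeAbelianGroup.of x) = 0 :=
  magDiff_nocrit hT x (nocrit_of_alt hT x.2 hl ha)

end Alt

section AltTuple
variable {T : SimpleGraph V}

lemma at'_altTuple {l : ℕ} (e : {p : V × V // T.Adj p.1 p.2}) {m : ℕ} (hm : m ≤ l) :
    at' (altTuple l e) m = if m % 2 = 0 then e.1.1 else e.1.2 := by
  show (if (min m l) % 2 = 0 then _ else _) = _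
  rw [Nat.min_eq_left hm]

lemma isMag_altTuple (hT : T.IsTree) {k : ℕ} (e : {p : V × V // T.Adj p.1 p.2}) :
    IsMagTuple T (k + 1) (altTuple (k + 1) e) := by
  rw [isMag_iff hT]
  constructor
  · intro m h1 h2
    rw [at'_altTuple e (by omega), at'_altTuple e (by omega)]
    by_cases hp : m % 2 = 0
    · rw [if_neg (by omega), if_pos hp]
      exact e.2.ne'
    · rw [if_pos (by omega), if_neg hp]
      exact e.2.ne
  · rw [nlen_range]
    have hone : ∀ i ∈ Finset.range (k + 1),
        T.dist (at' (altTuple (k + 1) e) i) (at' (altTuple (k + 1) e) (i + 1)) = 1 := by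
      intro i hi
      rw [Finset.mem_range] at hi
      rw [at'_altTuple e (by omega), at'_altTuple e (by omega)]
      by_cases hp : i % 2 = 0
      · rw [if_pos hp, if_neg (by omega)]
        exact done T e.2
      · rw [if_neg hp, if_pos (by omega)]
        have := done T e.2
        have := dcomm T e.1.1 e.1.2
        omega
    rw [Finset.sum_congr rfl hone, Finset.sum_const, Finset.card_range, smul_eq_mul, mul_one]

lemma isAlt_altTuple {k : ℕ} (e : {p : V × V // T.Adj p.1 p.2}) :
    isAlt (altTuple (k + 1) e) := by
  intro m h1 h2
  rw [at'_altTuple e (by omega), at'_altTuple e (by omega),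
    show (m - 1) % 2 = (m + 1) % 2 by omega]

lemma alt_reconstruct (hT : T.IsTree) {l k : ℕ} (hl : l = k + 1) (x : MagTuple T (k + 1) l)
    (ha : isAlt x.1) : ∀ m, m ≤ k + 1 →
      at' x.1 m = if m % 2 = 0 then at' x.1 0 else at' x.1 1 := by
  intro m
  induction m using Nat.strong_induction_on with
  | _ m ih =>
  intro hm
  rcases Nat.lt_or_ge m 2 with h2 | h2
  · rcases Nat.lt_or_ge m 1 with h1 | h1
    · rw [show m = 0 by omega, if_pos (by omega)]
    · rw [show m = 1 by omega, if_neg (by omega)]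
  · have hstep := ha (m - 1) (by omega) (by omega)
    rw [show m - 1 + 1 = m by omega] at hstep
    rw [← hstep, ih (m - 1 - 1) (by omega) (by omega)]
    by_cases hp : m % 2 = 0
    · rw [if_pos (by omega), if_pos hp]
    · rw [if_neg (by omega), if_neg hp]

/-- The oriented edge of a top-degree tuple. -/
noncomputable def edgeOf (hT : T.IsTree) {k : ℕ} (x : MagTuple T (k + 1) (k + 1)) :
    {p : V × V // T.Adj p.1 p.2} :=
  ⟨(at' x.1 0, at' x.1 1),
    dist_eq_one_iff_adj.mp (steps_one hT x.2 rfl (le_refl 1) (by omega))⟩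

lemma alt_tuple_eq (hT : T.IsTree) {k : ℕ} (x : MagTuple T (k + 1) (k + 1))
    (ha : isAlt x.1) : altTuple (k + 1) (edgeOf hT x) = x.1 := by
  apply tuple_ext
  intro n hn
  rw [at'_altTuple _ hn, alt_reconstruct hT rfl x ha n hn]
  rfl

/-- The basis map from oriented edges to top-degree cycles. -/
noncomputable def psiHom (hT : T.IsTree) (k : ℕ) :
    FreeAbelianGroup {p : V × V // T.Adj p.1 p.2} →+ MC T (k + 1) (k + 1) :=
  FreeAbelianGroup.lift fun e =>
    FreeAbelianGroup.of (⟨altTuple (k + 1) e, isMag_altTuple hT e⟩ : MagTuple T (k + 1) (k + 1))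

/-- The retraction reading off the edge of an alternating generator. -/
noncomputable def piHom (hT : T.IsTree) (k : ℕ) :
    MC T (k + 1) (k + 1) →+ FreeAbelianGroup {p : V × V // T.Adj p.1 p.2} :=
  FreeAbelianGroup.lift fun x =>
    if isAlt x.1 then FreeAbelianGroup.of (edgeOf hT x) else 0

lemma psiHom_of (hT : T.IsTree) (k : ℕ) (e : {p : V × V // T.Adj p.1 p.2}) :
    psiHom hT k (FreeAbelianGroup.of e) = FreeAbelianGroup.of
      (⟨altTuple (k + 1) e, isMag_altTuple hT e⟩ : MagTuple T (k + 1) (k + 1)) :=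
  FreeAbelianGroup.lift_apply_of _ _

lemma piHom_of (hT : T.IsTree) (k : ℕ) (x : MagTuple T (k + 1) (k + 1)) :
    piHom hT k (FreeAbelianGroup.of x)
      = if isAlt x.1 then FreeAbelianGroup.of (edgeOf hT x) else 0 :=
  FreeAbelianGroup.lift_apply_of _ _

lemma pi_psi (hT : T.IsTree) (k : ℕ) (e : {p : V × V // T.Adj p.1 p.2}) :
    piHom hT k (psiHom hT k (FreeAbelianGroup.of e)) = FreeAbelianGroup.of e := by
  erw [psiHom_of, piHom_of, if_pos (isAlt_altTuple e)]
  congr 1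

lemma diff_psi (hT : T.IsTree) (k : ℕ)
    (a : FreeAbelianGroup {p : V × V // T.Adj p.1 p.2}) :
    magDiff T k (k + 1) (psiHom hT k a) = 0 := by
  have : (magDiff T k (k + 1)).comp (psiHom hT k) = 0 := by
    refine FreeAbelianGroup.lift_ext _ _ fun e => ?_
    show magDiff T k (k + 1) (psiHom hT k (FreeAbelianGroup.of e)) = 0
    rw [psiHom_of]
    exact top_alt_diff_zero hT rfl _ (isAlt_altTuple e)
  exact DFunLike.congr_fun this a

lemma id_decomp (hT : T.IsTree) (k : ℕ) (z : MC T (k + 1) (k + 1)) :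
    psiHom hT k (piHom hT k z)
      + uHom hT (k + 1) k (magDiff T k (k + 1) z) = z := by
  have : (psiHom hT k).comp (piHom hT k)
      + (uHom hT (k + 1) k).comp (magDiff T k (k + 1))
      = AddMonoidHom.id (MC T (k + 1) (k + 1)) := by
    refine FreeAbelianGroup.lift_ext _ _ fun x => ?_
    show psiHom hT k (piHom hT k (FreeAbelianGroup.of x))
      + uHom hT (k + 1) k (magDiff T k (k + 1) (FreeAbelianGroup.of x))
      = FreeAbelianGroup.of x
    by_cases ha : isAlt x.1
    · erw [piHom_of, if_pos ha, psiHom_of,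
        top_alt_diff_zero hT rfl x ha, map_zero, add_zero,
        of_tuple_congr (hz := x.2) (alt_tuple_eq hT x ha)]
      rfl
    · rw [piHom_of, if_neg ha, map_zero, zero_add]
      exact top_nonalt hT rfl x ha
  have h := DFunLike.congr_fun this z
  simpa only [AddMonoidHom.add_apply, AddMonoidHom.comp_apply, AddMonoidHom.id_apply] using h

end AltTuple
/-- **Statement 14 (Magnitude homology of trees).** For a tree `T`: `MH_{0,0}(T)` is
the free abelian group on the vertices; for `l > 0`, `MH_{l,l}(T)` is the free abelian
group on the oriented edges, the generator `(x,y)` corresponding to the homology class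
of the alternating tuple `(x,y,x,y,…)` with `l+1` entries; and `MH_{k,l}(T) = 0` for
`k ≠ l`. -/
theorem MH_tree {V : Type*} [Fintype V] (T : SimpleGraph V) (hT : T.IsTree) :
    Nonempty (MH T 0 0 ≃+ FreeAbelianGroup V) ∧
      (∀ l : ℕ, 0 < l →
        ∃ φ : FreeAbelianGroup {p : V × V // T.Adj p.1 p.2} ≃+ MH T l l,
          ∀ e, φ (FreeAbelianGroup.of e) = mkMH T l l (mcGen T l (altTuple l e))) ∧
      ∀ k l : ℕ, k ≠ l → Subsingleton (MH T k l) := by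
  refine ⟨?_, ?_, ?_⟩
  · -- MH T 0 0 ≃+ FreeAbelianGroup V
    have hMag : ∀ v : V, IsMagTuple T 0 (fun _ : Fin 1 => v) := by
      intro v
      refine ⟨fun i => i.elim0, ?_⟩
      rw [tupleLen]
      simp
    set ι : FreeAbelianGroup V →+ MC T 0 0 :=
      FreeAbelianGroup.lift (fun v => FreeAbelianGroup.of
        (⟨fun _ => v, hMag v⟩ : MagTuple T 0 0)) with hι
    set π₀ : MC T 0 0 →+ FreeAbelianGroup V :=
      FreeAbelianGroup.lift (fun x : MagTuple T 0 0 => FreeAbelianGroup.of (x.1 0)) with hπ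
    have hπι : ∀ a, π₀ (ι a) = a := by
      intro a
      have : π₀.comp ι = AddMonoidHom.id _ := by
        refine FreeAbelianGroup.lift_ext _ _ fun v => ?_
        simp only [AddMonoidHom.comp_apply, AddMonoidHom.id_apply]
        show π₀ (ι (FreeAbelianGroup.of v)) = FreeAbelianGroup.of v
        erw [hι, FreeAbelianGroup.lift_apply_of]
      have h := DFunLike.congr_fun this a
      simpa using h
    have hιπ : ∀ z, ι (π₀ z) = z := by
      intro z
      have : ι.comp π₀ = AddMonoidHom.id _ := by
        refine FreeAbelianGroup.lift_ext _ _ fun x => ?_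
        show ι (π₀ (FreeAbelianGroup.of x)) = FreeAbelianGroup.of x
        have h1 : π₀ (FreeAbelianGroup.of x) = FreeAbelianGroup.of (x.1 0) :=
          FreeAbelianGroup.lift_apply_of _ _
        erw [h1, hι, FreeAbelianGroup.lift_apply_of]
        apply of_tuple_congr
        funext i
        exact congrArg x.1 (Fin.eq_zero i).symm
      have h := DFunLike.congr_fun this z
      simpa using h
    have hmem : ∀ a, ι a ∈ magCycles T 0 0 := fun a => trivial
    set f0 : FreeAbelianGroup V →+ MH T 0 0 :=
      (QuotientAddGroup.mk' (magBoundaries T 0 0)).comp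
        (ι.codRestrict (magCycles T 0 0) hmem) with hf0
    have hbij : Function.Bijective f0 := by
      constructor
      · rw [injective_iff_map_eq_zero]
        intro a ha
        rw [hf0] at ha
        have hmem2 : (ι.codRestrict (magCycles T 0 0) hmem) a ∈ magBoundaries T 0 0 :=
          (QuotientAddGroup.eq_zero_iff _).mp ha
        rw [magBoundaries, AddSubgroup.mem_addSubgroupOf,
          range_bot (MC_subsingleton (magTuple_empty_gt hT (by omega)))] at hmem2
        have : ι a = 0 := hmem2
        rw [← hπι a, this, map_zero]
      · intro q
        induction q using QuotientAddGroup.induction_on with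
        | H z =>
        refine ⟨π₀ z.1, ?_⟩
        rw [hf0]
        apply congrArg (QuotientAddGroup.mk)
        apply Subtype.ext
        show ι (π₀ z.1) = z.1
        exact hιπ z.1
    exact ⟨(AddEquiv.ofBijective f0 hbij).symm⟩
  · -- positive degree
    intro l hl
    obtain ⟨k, rfl⟩ : ∃ k, l = k + 1 := ⟨l - 1, by omega⟩
    have hmem : ∀ a, psiHom hT k a ∈ magCycles T (k + 1) (k + 1) := by
      intro a
      exact AddMonoidHom.mem_ker.mpr (diff_psi hT k a)
    set f : FreeAbelianGroup {p : V × V // T.Adj p.1 p.2} →+ MH T (k + 1) (k + 1) :=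
      (QuotientAddGroup.mk' (magBoundaries T (k + 1) (k + 1))).comp
        ((psiHom hT k).codRestrict (magCycles T (k + 1) (k + 1)) hmem) with hf
    have hbij : Function.Bijective f := by
      constructor
      · rw [injective_iff_map_eq_zero]
        intro a ha
        rw [hf] at ha
        have hmem2 := (QuotientAddGroup.eq_zero_iff _).mp ha
        rw [magBoundaries, AddSubgroup.mem_addSubgroupOf,
          range_bot (MC_subsingleton (magTuple_empty_gt hT (by omega)))] at hmem2
        have h0 : psiHom hT k a = 0 := hmem2
        have : piHom hT k (psiHom hT k a) = a := by
          have hcomp : (piHom hT k).comp (psiHom hT k) = AddMonoidHom.id _ := by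
            refine FreeAbelianGroup.lift_ext _ _ fun e => ?_
            simpa using pi_psi hT k e
          simpa using DFunLike.congr_fun hcomp a
        rw [← this, h0, map_zero]
      · intro q
        induction q using QuotientAddGroup.induction_on with
        | H z =>
        refine ⟨piHom hT k z.1, ?_⟩
        rw [hf]
        apply congrArg (QuotientAddGroup.mk)
        apply Subtype.ext
        show psiHom hT k (piHom hT k z.1) = z.1
        have hz : magDiff T k (k + 1) z.1 = 0 := z.2
        have := id_decomp hT k z.1
        rw [hz, map_zero, add_zero] at this
        exact this
    refine ⟨AddEquiv.ofBijective f hbij, fun e => ?_⟩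
    show f (FreeAbelianGroup.of e) = mkMH T (k + 1) (k + 1) (mcGen T (k + 1) (altTuple (k + 1) e))
    have hval : mcGen T (k + 1) (altTuple (k + 1) e)
        = FreeAbelianGroup.of (⟨altTuple (k + 1) e, isMag_altTuple hT e⟩
            : MagTuple T (k + 1) (k + 1)) := mcGen_valid (isMag_altTuple hT e)
    have hcyc : mcGen T (k + 1) (altTuple (k + 1) e) ∈ magCycles T (k + 1) (k + 1) := by
      rw [hval]
      exact AddMonoidHom.mem_ker.mpr (top_alt_diff_zero hT rfl _ (isAlt_altTuple e))
    erw [mkMH, dif_pos hcyc, hf]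
    apply congrArg (QuotientAddGroup.mk)
    apply Subtype.ext
    show psiHom hT k (FreeAbelianGroup.of e) = mcGen T (k + 1) (altTuple (k + 1) e)
    rw [psiHom_of, hval]
  · -- off-diagonal vanishing
    intro k l hkl
    rcases Nat.lt_or_ge l k with h | h
    · exact MH_subsingleton_of_MC (MC_subsingleton (magTuple_empty_gt hT h))
    · have hlk : k < l := by omega
      rcases Nat.eq_zero_or_pos k with rfl | hk
      · exact MH_subsingleton_of_MC (MC_subsingleton (magTuple_empty_zero hlk))
      · obtain ⟨k', rfl⟩ : ∃ k', k = k' + 1 := ⟨k - 1, by omega⟩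
        apply MH_subsingleton_of_top
        rw [eq_top_iff]
        rintro ⟨z, hz⟩ -
        rw [magBoundaries, AddSubgroup.mem_addSubgroupOf]
        refine ⟨uHom hT l (k' + 1) z, ?_⟩
        have hid : (magDiff T (k' + 1) l).comp (uHom hT l (k' + 1))
            + (uHom hT l k').comp (magDiff T k' l)
            = AddMonoidHom.id (MC T (k' + 1) l) := by
          refine FreeAbelianGroup.lift_ext _ _ fun x => ?_
          show magDiff T (k' + 1) l (uHom hT l (k' + 1) (FreeAbelianGroup.of x))
            + uHom hT l k' (magDiff T k' l (FreeAbelianGroup.of x)) = FreeAbelianGroup.of x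
          rw [uHom_of]
          exact main_identity hT x (exists_crit hT x.2 (by omega))
        have hoz := DFunLike.congr_fun hid z
        simp only [AddMonoidHom.add_apply, AddMonoidHom.comp_apply,
          AddMonoidHom.id_apply] at hoz
        have hzz : magDiff T k' l z = 0 := hz
        rw [hzz, map_zero, add_zero] at hoz
        exact hoz

end MagnitudeHomology
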